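/- Let Γ be the star-shaped graph with central vertex of weight -b and n arms with weights -b_{ij} ≤ -2 as above. If b ≥ n + 1, then the intersection matrix M(Γ) is negative definite. -/

import Mathlib

open Finset Matrix

private lemma arm_ineq : ∀ (m : ℕ), 1 ≤ m → ∀ (A Y : ℕ → ℝ) (c : ℝ),
    (∀ j < m, 2 ≤ A j) →
    (c - Y 0)^2 + (∑ j ∈ Finset.range (m-1), (Y j - Y (j+1))^2) + (Y (m-1))^2
      ≤ c^2 - 2*c*Y 0 + ∑ j ∈ Finset.range m, A j * (Y j)^2
        - 2 * ∑ j ∈ Finset.range (m-1), Y j * Y (j+1) := by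
  intro m hm
  induction m, hm using Nat.le_induction with
  | base =>
    intro A Y c hA
    have h0 := hA 0 (by norm_num)
    simp only [Nat.sub_self, Finset.range_zero, Finset.sum_empty, Finset.sum_range_one]
    nlinarith [sq_nonneg (Y 0)]
  | succ m hm ih =>
    intro A Y c hA
    obtain ⟨p, rfl⟩ : ∃ p, m = p + 1 := ⟨m - 1, by omega⟩
    have key := ih (fun j => A (j+1)) (fun j => Y (j+1)) (Y 0)
      (fun j hj => hA (j+1) (by omega))
    simp only [Nat.add_sub_cancel] at key ⊢
    rw [Finset.sum_range_succ' (fun j => (Y j - Y (j+1))^2) p,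
        Finset.sum_range_succ' (fun j => A j * (Y j)^2) (p+1),
        Finset.sum_range_succ' (fun j => Y j * Y (j+1)) p]
    have hA0 := hA 0 (by omega)
    nlinarith [key, hA0, sq_nonneg (Y 0)]

private lemma arm_zero (m : ℕ) (hm : 1 ≤ m) (Y : ℕ → ℝ) (c : ℝ)
    (h : (c - Y 0)^2 + (∑ j ∈ Finset.range (m-1), (Y j - Y (j+1))^2) + (Y (m-1))^2 ≤ 0) :
    ∀ j < m, Y j = 0 := by
  have hs : ∀ j ∈ Finset.range (m-1), (0:ℝ) ≤ (Y j - Y (j+1))^2 := fun j _ => sq_nonneg _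
  have h1 : (0:ℝ) ≤ ∑ j ∈ Finset.range (m-1), (Y j - Y (j+1))^2 := Finset.sum_nonneg hs
  have hlast : Y (m-1) = 0 := by nlinarith [sq_nonneg (c - Y 0), sq_nonneg (Y (m-1))]
  have hsum0 : ∑ j ∈ Finset.range (m-1), (Y j - Y (j+1))^2 = 0 := by
    nlinarith [sq_nonneg (c - Y 0), sq_nonneg (Y (m-1))]
  have hstep : ∀ j < m - 1, Y j = Y (j+1) := by
    intro j hj
    have h2 := (Finset.sum_eq_zero_iff_of_nonneg hs).mp hsum0 j (Finset.mem_range.mpr hj)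
    have h3 := sq_eq_zero_iff.mp h2
    linarith
  have haux : ∀ d, Y (m - 1 - d) = 0 := by
    intro d
    induction d with
    | zero => simpa using hlast
    | succ d hd =>
      by_cases hc : m - 1 ≤ d
      · have e : m - 1 - (d+1) = m - 1 - d := by omega
        rw [e]; exact hd
      · have h2 : m - 1 - (d+1) < m - 1 := by omega
        have h3 : m - 1 - (d+1) + 1 = m - 1 - d := by omega
        rw [hstep _ h2, h3]; exact hd
  intro j hj
  have e : j = m - 1 - (m - 1 - j) := by omega
  rw [e]; exact haux _

private lemma ind_sum' (m : ℕ) (g : Fin m → ℝ) (t : ℕ) :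
    (∑ j : Fin m, (if (j:ℕ) = t then (1:ℝ) else 0) * g j) =
      if h : t < m then g ⟨t, h⟩ else 0 := by
  split_ifs with h
  · rw [Finset.sum_eq_single ⟨t, h⟩]
    · simp
    · intro j _ hj
      have hne : (j:ℕ) ≠ t := fun he => hj (Fin.ext he)
      simp [hne]
    · simp
  · apply Finset.sum_eq_zero
    intro j _
    have hj := j.isLt
    have hne : (j:ℕ) ≠ t := by omega
    simp [hne]

private lemma arm_sum (m : ℕ) (hm : 1 ≤ m) (N : Matrix (Fin m) (Fin m) ℝ) (A : ℕ → ℝ)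
    (hd : ∀ j : Fin m, N j j = -(A (j:ℕ)))
    (hadj : ∀ j k : Fin m, (j:ℕ)+1 = (k:ℕ) → N j k = 1 ∧ N k j = 1)
    (hfar : ∀ j k : Fin m, (j:ℕ)+1 < (k:ℕ) → N j k = 0 ∧ N k j = 0)
    (z : Fin m → ℝ) (Z : ℕ → ℝ) (hZ : ∀ (k : ℕ) (h : k < m), Z k = z ⟨k,h⟩)
    (hZ0 : ∀ k, m ≤ k → Z k = 0) :
    ∑ j, ∑ j', z j * N j j' * z j' =
      -(∑ k ∈ Finset.range m, A k * (Z k)^2) + 2 * ∑ k ∈ Finset.range (m-1), Z k * Z (k+1) := by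
  have hz : ∀ j : Fin m, z j = Z (j:ℕ) := by
    intro j; rw [hZ _ j.isLt]
  have hdite : ∀ t, (if h : t < m then z ⟨t,h⟩ else 0) = Z t := by
    intro t; split_ifs with h
    · exact (hZ t h).symm
    · exact (hZ0 t (le_of_not_gt h)).symm
  have hN : ∀ j j' : Fin m, N j j' =
      (if j' = j then -(A (j:ℕ)) else 0) + (if (j':ℕ) = (j:ℕ)+1 then 1 else 0)
        + (if (j:ℕ) = (j':ℕ)+1 then 1 else 0) := by
    intro j j'
    rcases lt_trichotomy ((j:ℕ)) ((j':ℕ)) with h|h|h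
    · rcases eq_or_lt_of_le (Nat.succ_le_of_lt h) with h1|h1
      · rw [if_neg (by intro e; rw [e] at h; omega), if_pos (by omega), if_neg (by omega),
          (hadj j j' h1).1]; ring
      · rw [if_neg (by intro e; rw [e] at h; omega), if_neg (by omega), if_neg (by omega),
          (hfar j j' h1).1]; ring
    · have e : j' = j := Fin.ext h.symm
      rw [if_pos e, if_neg (by omega), if_neg (by omega), e, hd j]; ring
    · rcases eq_or_lt_of_le (Nat.succ_le_of_lt h) with h1|h1
      · rw [if_neg (by intro e; rw [e] at h; omega), if_neg (by omega), if_pos (by omega),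
          (hadj j' j h1).2]; ring
      · rw [if_neg (by intro e; rw [e] at h; omega), if_neg (by omega), if_neg (by omega),
          (hfar j' j h1).2]; ring
  simp only [hN, mul_add, add_mul, Finset.sum_add_distrib]
  have S1 : ∑ j : Fin m, ∑ j' : Fin m, z j * (if j' = j then -(A (j:ℕ)) else 0) * z j'
      = -(∑ k ∈ Finset.range m, A k * (Z k)^2) := by
    have e1 : ∀ j : Fin m, ∑ j' : Fin m, z j * (if j' = j then -(A (j:ℕ)) else 0) * z j'
        = -(A (j:ℕ) * (Z (j:ℕ))^2) := by
      intro j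
      rw [Finset.sum_eq_single j]
      · rw [if_pos rfl, hz j]; ring
      · intro j' _ hj'; rw [if_neg hj']; ring
      · intro hcon; exact absurd (Finset.mem_univ j) hcon
    rw [Finset.sum_congr rfl (fun j _ => e1 j), ← Finset.sum_neg_distrib,
      Fin.sum_univ_eq_sum_range (fun k => -(A k * (Z k)^2)) m]
  have S2gen : ∀ j : Fin m, ∑ j' : Fin m, z j * (if (j':ℕ) = (j:ℕ)+1 then 1 else 0) * z j'
      = Z (j:ℕ) * Z ((j:ℕ)+1) := by
    intro j
    have e2 : ∀ j' : Fin m, z j * (if (j':ℕ) = (j:ℕ)+1 then 1 else 0) * z j'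
        = z j * ((if (j':ℕ) = (j:ℕ)+1 then 1 else 0) * z j') := fun j' => by ring
    rw [Finset.sum_congr rfl (fun j' _ => e2 j'), ← Finset.mul_sum,
      ind_sum' m z ((j:ℕ)+1), hdite, hz]
  have S2 : ∑ j : Fin m, ∑ j' : Fin m, z j * (if (j':ℕ) = (j:ℕ)+1 then 1 else 0) * z j'
      = ∑ k ∈ Finset.range (m-1), Z k * Z (k+1) := by
    rw [Finset.sum_congr rfl (fun j _ => S2gen j),
      Fin.sum_univ_eq_sum_range (fun k => Z k * Z (k+1)) m]
    obtain ⟨p, rfl⟩ : ∃ p, m = p + 1 := ⟨m - 1, by omega⟩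
    rw [Finset.sum_range_succ, Nat.add_sub_cancel, hZ0 (p+1) le_rfl]
    ring
  have S3 : ∑ j : Fin m, ∑ j' : Fin m, z j * (if (j:ℕ) = (j':ℕ)+1 then 1 else 0) * z j'
      = ∑ k ∈ Finset.range (m-1), Z k * Z (k+1) := by
    rw [Finset.sum_comm]
    rw [← S2]
    apply Finset.sum_congr rfl; intro j' _
    apply Finset.sum_congr rfl; intro j _
    ring
  rw [S1, S2, S3]; ring

/-- If `b ≥ n + 1`, the intersection matrix of the star-shaped plumbing graph `Γ` with
central weight `-b` and `n` arms with weights `-a_{ij} ≤ -2` is negative definite. -/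
theorem stmt_9 (n : ℕ) (b : ℤ) (hb : (n : ℤ) + 1 ≤ b)
    (r : Fin n → ℕ) (hr : ∀ i, 1 ≤ r i)
    (a : Fin n → ℕ → ℤ) (ha : ∀ i k, 1 ≤ k → k ≤ r i → 2 ≤ a i k)
    (M : Matrix (Unit ⊕ (Σ i : Fin n, Fin (r i))) (Unit ⊕ (Σ i : Fin n, Fin (r i))) ℝ)
    (hcc : M (Sum.inl ()) (Sum.inl ()) = -(b : ℝ))
    (hca : ∀ (i : Fin n) (j : Fin (r i)),
      M (Sum.inl ()) (Sum.inr ⟨i, j⟩) = if (j : ℕ) = 0 then 1 else 0)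
    (hac : ∀ (i : Fin n) (j : Fin (r i)),
      M (Sum.inr ⟨i, j⟩) (Sum.inl ()) = if (j : ℕ) = 0 then 1 else 0)
    (hdiag : ∀ (i : Fin n) (j : Fin (r i)),
      M (Sum.inr ⟨i, j⟩) (Sum.inr ⟨i, j⟩) = -((a i ((j : ℕ) + 1) : ℤ) : ℝ))
    (hadj : ∀ (i : Fin n) (j k : Fin (r i)), (j : ℕ) + 1 = (k : ℕ) →
      M (Sum.inr ⟨i, j⟩) (Sum.inr ⟨i, k⟩) = 1 ∧ M (Sum.inr ⟨i, k⟩) (Sum.inr ⟨i, j⟩) = 1)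
    (hfar : ∀ (i : Fin n) (j k : Fin (r i)), (j : ℕ) + 1 < (k : ℕ) →
      M (Sum.inr ⟨i, j⟩) (Sum.inr ⟨i, k⟩) = 0 ∧ M (Sum.inr ⟨i, k⟩) (Sum.inr ⟨i, j⟩) = 0)
    (hdiff : ∀ (i i' : Fin n) (j : Fin (r i)) (j' : Fin (r i')), i ≠ i' →
      M (Sum.inr ⟨i, j⟩) (Sum.inr ⟨i', j'⟩) = 0) :
    (-M).PosDef := by
  have hsym : ∀ u v, M u v = M v u := by
    rintro (⟨⟩|⟨i,j⟩) (⟨⟩|⟨i',j'⟩)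
    · rfl
    · rw [hca, hac]
    · rw [hca, hac]
    · by_cases hii : i = i'
      · subst hii
        rcases lt_trichotomy ((j:ℕ)) ((j':ℕ)) with h|h|h
        · rcases eq_or_lt_of_le (Nat.succ_le_of_lt h) with h1|h1
          · rw [(hadj i j j' h1).1, (hadj i j j' h1).2]
          · rw [(hfar i j j' h1).1, (hfar i j j' h1).2]
        · have e : j' = j := Fin.ext h.symm
          rw [e]
        · rcases eq_or_lt_of_le (Nat.succ_le_of_lt h) with h1|h1
          · rw [(hadj i j' j h1).1, (hadj i j' j h1).2]
          · rw [(hfar i j' j h1).1, (hfar i j' j h1).2]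
      · rw [hdiff i i' j j' hii, hdiff i' i j' j (Ne.symm hii)]
  rw [Matrix.posDef_iff_dotProduct_mulVec]
  constructor
  · have hM : M.IsHermitian := by
      ext u v
      simp only [Matrix.conjTranspose_apply, RCLike.star_def, starRingEnd_apply, star_trivial]
      exact hsym v u
    exact hM.neg
  intro x hx
  have hr0 : ∀ i, 0 < r i := hr
  have hstar : star x = x := funext fun u => star_trivial _
  rw [hstar]
  set c := x (Sum.inl ()) with hcdef
  set Y : Fin n → ℕ → ℝ :=
    fun i k => if h : k < r i then x (Sum.inr ⟨i, ⟨k, h⟩⟩) else 0 with hYdef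
  have hYlt : ∀ (i : Fin n) (k : ℕ) (h : k < r i), Y i k = x (Sum.inr ⟨i, ⟨k, h⟩⟩) := by
    intro i k h; simp [hYdef, h]
  have hYge : ∀ (i : Fin n) (k : ℕ), r i ≤ k → Y i k = 0 := by
    intro i k h; simp [hYdef, Nat.not_lt.mpr h]
  have hYfin : ∀ (i : Fin n) (j : Fin (r i)), Y i (j:ℕ) = x (Sum.inr ⟨i, j⟩) := by
    intro i j; rw [hYlt i j j.isLt]
  have hdot : x ⬝ᵥ ((-M) *ᵥ x) = -∑ u, ∑ v, x u * M u v * x v := by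
    simp only [dotProduct, Matrix.mulVec, Matrix.neg_apply, neg_mul, mul_neg,
      Finset.sum_neg_distrib, Finset.mul_sum, mul_assoc]
  have hT : ∑ u, ∑ v, x u * M u v * x v
      = c * (-(b:ℝ)) * c + (∑ i, c * Y i 0)
        + ((∑ i, c * Y i 0)
            + ∑ i, (-(∑ k ∈ Finset.range (r i), ((a i (k+1) : ℤ):ℝ) * (Y i k)^2)
              + 2 * ∑ k ∈ Finset.range (r i - 1), Y i k * Y i (k+1))) := by
    rw [Fintype.sum_sum_type]
    simp only [Fintype.sum_sum_type, Fintype.sum_unique, ← Finset.univ_sigma_univ,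
      Finset.sum_sigma]
    rw [hcc]
    have hrow_c : ∀ i ∈ (Finset.univ : Finset (Fin n)),
        (∑ j : Fin (r i), x (Sum.inl ()) * M (Sum.inl ()) (Sum.inr ⟨i,j⟩) * x (Sum.inr ⟨i,j⟩))
          = c * Y i 0 := by
      intro i _
      have e : ∀ j : Fin (r i),
          x (Sum.inl ()) * M (Sum.inl ()) (Sum.inr ⟨i,j⟩) * x (Sum.inr ⟨i,j⟩)
          = x (Sum.inl ()) * ((if (j:ℕ) = 0 then (1:ℝ) else 0) * x (Sum.inr ⟨i,j⟩)) := by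
        intro j; rw [hca]; ring
      rw [Finset.sum_congr rfl (fun j _ => e j), ← Finset.mul_sum,
        ind_sum' (r i) (fun j => x (Sum.inr ⟨i,j⟩)) 0, dif_pos (hr0 i), ← hYlt i 0 (hr0 i), hcdef]
    have hrow_a : ∀ i ∈ (Finset.univ : Finset (Fin n)),
        (∑ j : Fin (r i), (x (Sum.inr ⟨i,j⟩) * M (Sum.inr ⟨i,j⟩) (Sum.inl ()) * x (Sum.inl ())
          + ∑ i' : Fin n, ∑ j' : Fin (r i'),
              x (Sum.inr ⟨i,j⟩) * M (Sum.inr ⟨i,j⟩) (Sum.inr ⟨i',j'⟩) * x (Sum.inr ⟨i',j'⟩)))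
        = c * Y i 0
            + (-(∑ k ∈ Finset.range (r i), ((a i (k+1) : ℤ):ℝ) * (Y i k)^2)
              + 2 * ∑ k ∈ Finset.range (r i - 1), Y i k * Y i (k+1)) := by
      intro i _
      rw [Finset.sum_add_distrib]
      congr 1
      · have e : ∀ j : Fin (r i),
            x (Sum.inr ⟨i,j⟩) * M (Sum.inr ⟨i,j⟩) (Sum.inl ()) * x (Sum.inl ())
            = x (Sum.inl ()) * ((if (j:ℕ) = 0 then (1:ℝ) else 0) * x (Sum.inr ⟨i,j⟩)) := by
          intro j; rw [hac]; ring
        rw [Finset.sum_congr rfl (fun j _ => e j), ← Finset.mul_sum,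
          ind_sum' (r i) (fun j => x (Sum.inr ⟨i,j⟩)) 0, dif_pos (hr0 i), ← hYlt i 0 (hr0 i), hcdef]
      · have e : ∀ j : Fin (r i),
            (∑ i' : Fin n, ∑ j' : Fin (r i'),
              x (Sum.inr ⟨i,j⟩) * M (Sum.inr ⟨i,j⟩) (Sum.inr ⟨i',j'⟩) * x (Sum.inr ⟨i',j'⟩))
            = ∑ j' : Fin (r i),
                x (Sum.inr ⟨i,j⟩) * M (Sum.inr ⟨i,j⟩) (Sum.inr ⟨i,j'⟩) * x (Sum.inr ⟨i,j'⟩) := by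
          intro j
          rw [Finset.sum_eq_single i]
          · intro i' _ hne
            apply Finset.sum_eq_zero; intro j' _
            rw [hdiff i i' j j' (Ne.symm hne)]; ring
          · intro hcon; exact absurd (Finset.mem_univ i) hcon
        rw [Finset.sum_congr rfl (fun j _ => e j)]
        exact arm_sum (r i) (hr i) (fun j j' => M (Sum.inr ⟨i,j⟩) (Sum.inr ⟨i,j'⟩))
          (fun k => ((a i (k+1) : ℤ):ℝ)) (fun j => hdiag i j) (fun j k h => hadj i j k h)
          (fun j k h => hfar i j k h) (fun j => x (Sum.inr ⟨i,j⟩)) (Y i)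
          (fun k h => hYlt i k h) (hYge i)
    rw [Finset.sum_congr rfl hrow_c, Finset.sum_congr rfl hrow_a, Finset.sum_add_distrib]
  have hbound : ∀ i ∈ (Finset.univ : Finset (Fin n)),
      (c - Y i 0)^2 + (∑ k ∈ Finset.range (r i - 1), (Y i k - Y i (k+1))^2) + (Y i (r i - 1))^2
      ≤ c^2 - 2*c*Y i 0 + ∑ k ∈ Finset.range (r i), ((a i (k+1) : ℤ):ℝ) * (Y i k)^2
        - 2 * ∑ k ∈ Finset.range (r i - 1), Y i k * Y i (k+1) := by
    intro i _
    apply arm_ineq (r i) (hr i)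
    intro k hk
    exact_mod_cast ha i (k+1) (by omega) (by omega)
  have hGnn : ∀ i ∈ (Finset.univ : Finset (Fin n)),
      (0:ℝ) ≤ (c - Y i 0)^2 + (∑ k ∈ Finset.range (r i - 1), (Y i k - Y i (k+1))^2)
        + (Y i (r i - 1))^2 := by
    intro i _
    have h1 : (0:ℝ) ≤ ∑ k ∈ Finset.range (r i - 1), (Y i k - Y i (k+1))^2 :=
      Finset.sum_nonneg (fun k _ => sq_nonneg _)
    nlinarith [sq_nonneg (c - Y i 0), sq_nonneg (Y i (r i - 1))]
  have hsumG : (0:ℝ) ≤ ∑ i, ((c - Y i 0)^2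
      + (∑ k ∈ Finset.range (r i - 1), (Y i k - Y i (k+1))^2) + (Y i (r i - 1))^2) :=
    Finset.sum_nonneg hGnn
  have hbn : (1:ℝ) ≤ (b:ℝ) - n := by
    have h1 : ((n:ℝ)) + 1 ≤ (b:ℝ) := by exact_mod_cast hb
    linarith
  have hexp : ∑ i : Fin n, (c^2 - 2*c*Y i 0
        + ∑ k ∈ Finset.range (r i), ((a i (k+1) : ℤ):ℝ) * (Y i k)^2
        - 2 * ∑ k ∈ Finset.range (r i - 1), Y i k * Y i (k+1))
      = (n:ℝ)*c^2 - 2*(∑ i, c * Y i 0)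
        - ∑ i, (-(∑ k ∈ Finset.range (r i), ((a i (k+1) : ℤ):ℝ) * (Y i k)^2)
            + 2 * ∑ k ∈ Finset.range (r i - 1), Y i k * Y i (k+1)) := by
    simp only [Finset.sum_sub_distrib, Finset.sum_add_distrib, Finset.sum_neg_distrib,
      Finset.mul_sum, Finset.sum_const, Finset.card_univ, Fintype.card_fin, nsmul_eq_mul]
    rw [show (∑ x : Fin n, 2 * c * Y x 0) = ∑ x : Fin n, 2 * (c * Y x 0) from
      Finset.sum_congr rfl (fun i _ => by ring)]
    ring
  have hkey : ((b:ℝ) - n) * c^2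
      + ∑ i, ((c - Y i 0)^2 + (∑ k ∈ Finset.range (r i - 1), (Y i k - Y i (k+1))^2)
          + (Y i (r i - 1))^2)
      ≤ x ⬝ᵥ ((-M) *ᵥ x) := by
    rw [hdot, hT]
    have hsum_le := Finset.sum_le_sum hbound
    rw [hexp] at hsum_le
    linarith
  obtain ⟨u, hu⟩ := Function.ne_iff.mp hx
  rcases u with ⟨⟩ | ⟨i, j⟩
  · have hc : c ≠ 0 := hu
    have hcsq : 0 < c^2 := by positivity
    have hpos : 0 < ((b:ℝ) - n) * c^2 := by nlinarith
    linarith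
  · have hYne : Y i (j:ℕ) ≠ 0 := by
      rw [hYfin i j]; exact hu
    have hGpos : 0 < (c - Y i 0)^2
        + (∑ k ∈ Finset.range (r i - 1), (Y i k - Y i (k+1))^2) + (Y i (r i - 1))^2 := by
      by_contra hle
      push_neg at hle
      exact hYne (arm_zero (r i) (hr i) (Y i) c hle (j:ℕ) j.isLt)
    have hsingle : (c - Y i 0)^2
        + (∑ k ∈ Finset.range (r i - 1), (Y i k - Y i (k+1))^2) + (Y i (r i - 1))^2
        ≤ ∑ i', ((c - Y i' 0)^2
          + (∑ k ∈ Finset.range (r i' - 1), (Y i' k - Y i' (k+1))^2) + (Y i' (r i' - 1))^2) :=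
      Finset.single_le_sum hGnn (Finset.mem_univ i)
    have h0 : (0:ℝ) ≤ ((b:ℝ) - n) * c^2 := mul_nonneg (by linarith) (sq_nonneg c)
    linarith
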